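/- Let G be a singular core-labelled graph with CV × N(CV) biadjacency submatrix Q. The matrix Q has linearly independent columns if and only if η(G) = |CV| - |N(CV)|. -/
import Mathlib


open scoped Classical
open Matrix

/-- Nullity of a real square matrix: dimension of its kernel. -/
noncomputable def nullity {m : Type*} [Fintype m] (A : Matrix m m ℝ) : ℕ :=
  Module.finrank ℝ (LinearMap.ker A.mulVecLin)

variable {V : Type*} [Fintype V] [DecidableEq V]

/-- The set of core vertices of `G`: vertices in the support of some kernel vector. -/
def coreSet (G : SimpleGraph V) [DecidableRel G.Adj] : Set V :=
  {v | ∃ x : V → ℝ, (G.adjMatrix ℝ).mulVec x = 0 ∧ x v ≠ 0}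

/-- The neighbours of core vertices (which are core-forbidden when `coreSet` is
independent). -/
def nbhdSet (G : SimpleGraph V) [DecidableRel G.Adj] : Set V :=
  {v | v ∉ coreSet G ∧ ∃ u ∈ coreSet G, G.Adj u v}

/-- The remote core-forbidden vertices. -/
def remoteSet (G : SimpleGraph V) [DecidableRel G.Adj] : Set V :=
  {v | v ∉ coreSet G ∧ v ∉ nbhdSet G}

/-- The `CV × N(CV)` submatrix `Q` of the adjacency matrix. -/
noncomputable def Qmat (G : SimpleGraph V) [DecidableRel G.Adj] :
    Matrix (coreSet G) (nbhdSet G) ℝ :=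
  Matrix.of fun i j => (G.adjMatrix ℝ) i.val j.val

set_option linter.unusedSectionVars false

section aux

variable (G : SimpleGraph V) [DecidableRel G.Adj]

/-- extension by zero -/
noncomputable def extMap : ((coreSet G) → ℝ) →ₗ[ℝ] (V → ℝ) where
  toFun y := fun v => if h : v ∈ coreSet G then y ⟨v, h⟩ else 0
  map_add' y z := by ext v; by_cases h : v ∈ coreSet G <;> simp [h]
  map_smul' c y := by ext v; by_cases h : v ∈ coreSet G <;> simp [h]

lemma ext_sum (y : (coreSet G) → ℝ) (v : V) :
    ∑ u : V, (G.adjMatrix ℝ) v u * extMap G y u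
      = ∑ i : coreSet G, (G.adjMatrix ℝ) v i * y i := by
  have h1 : ∑ u ∈ Finset.univ.filter (· ∈ coreSet G),
      (G.adjMatrix ℝ) v u * extMap G y u
      = ∑ u : V, (G.adjMatrix ℝ) v u * extMap G y u := by
    refine Finset.sum_filter_of_ne fun u _ hne => ?_
    by_contra h
    simp [extMap, h] at hne
  rw [← h1]
  rw [Finset.sum_subtype (Finset.univ.filter (· ∈ coreSet G))
    (p := fun u => u ∈ coreSet G) (by simp)
    (fun u => (G.adjMatrix ℝ) v u * extMap G y u)]
  refine Finset.sum_congr rfl fun i _ => ?_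
  have : extMap G y i.val = y i := by simp [extMap, i.property]
  rw [this]

lemma ker_vanish {x : V → ℝ} (hx : (G.adjMatrix ℝ).mulVec x = 0) {v : V}
    (hv : v ∉ coreSet G) : x v = 0 := by
  by_contra h
  exact hv ⟨x, hx, h⟩

/-- `Qᵀ` as a linear map. -/
noncomputable def Lmap : ((coreSet G) → ℝ) →ₗ[ℝ] ((nbhdSet G) → ℝ) :=
  (Qmat G)ᵀ.mulVecLin

lemma mulVec_ext (hind : ∀ a b : V, a ∈ coreSet G → b ∈ coreSet G → ¬ G.Adj a b)
    (y : (coreSet G) → ℝ) (hy : Lmap G y = 0) :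
    (G.adjMatrix ℝ).mulVec (extMap G y) = 0 := by
  funext v
  have hv : (G.adjMatrix ℝ).mulVec (extMap G y) v
      = ∑ i : coreSet G, (G.adjMatrix ℝ) v i * y i := ext_sum G y v
  by_cases hc : v ∈ coreSet G
  · rw [hv]
    simp only [Pi.zero_apply]
    refine Finset.sum_eq_zero fun i _ => ?_
    have : ¬ G.Adj v i.val := hind v i.val hc i.property
    simp [SimpleGraph.adjMatrix_apply, this]
  by_cases hn : v ∈ nbhdSet G
  · have hy' := congrFun hy ⟨v, hn⟩
    simp only [Lmap, mulVecLin_apply, mulVec, dotProduct, Pi.zero_apply] at hy'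
    rw [hv]
    simp only [Pi.zero_apply]
    rw [← hy']
    refine Finset.sum_congr rfl fun i _ => ?_
    simp [Qmat, transpose_apply, SimpleGraph.adjMatrix_apply, G.adj_comm]
  · rw [hv]
    simp only [Pi.zero_apply]
    refine Finset.sum_eq_zero fun i _ => ?_
    have : ¬ G.Adj v i.val := by
      intro hadj
      exact hn ⟨hc, i.val, i.property, hadj.symm⟩
    simp [SimpleGraph.adjMatrix_apply, this]

lemma Lmap_restrict {x : V → ℝ} (hx : (G.adjMatrix ℝ).mulVec x = 0) :
    Lmap G (fun i : coreSet G => x i.val) = 0 := by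
  funext j
  have hj := congrFun hx j.val
  simp only [mulVec, dotProduct, Pi.zero_apply] at hj
  simp only [Lmap, mulVecLin_apply, mulVec, dotProduct, Pi.zero_apply]
  rw [← hj]
  have h1 : ∑ u ∈ Finset.univ.filter (· ∈ coreSet G),
      (G.adjMatrix ℝ) j.val u * x u = ∑ u : V, (G.adjMatrix ℝ) j.val u * x u := by
    refine Finset.sum_filter_of_ne fun u _ hne => ?_
    by_contra h
    rw [ker_vanish G hx h] at hne
    simp at hne
  rw [← h1, Finset.sum_subtype (Finset.univ.filter (· ∈ coreSet G))
    (p := fun u => u ∈ coreSet G) (by simp)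
    (fun u => (G.adjMatrix ℝ) j.val u * x u)]
  refine Finset.sum_congr rfl fun i _ => ?_
  simp [Qmat, transpose_apply, SimpleGraph.adjMatrix_apply, G.adj_comm]

/-- The kernel of the adjacency matrix is isomorphic to the kernel of `Qᵀ`. -/
noncomputable def kerEquiv (hind : ∀ a b : V, a ∈ coreSet G → b ∈ coreSet G → ¬ G.Adj a b) :
    LinearMap.ker (G.adjMatrix ℝ).mulVecLin ≃ₗ[ℝ] LinearMap.ker (Lmap G) where
  toFun x := ⟨fun i => x.val i.val, by
    have hx : (G.adjMatrix ℝ).mulVec x.val = 0 := x.property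
    exact Lmap_restrict G hx⟩
  invFun y := ⟨extMap G y.val, by
    have : Lmap G y.val = 0 := y.property
    exact mulVec_ext G hind y.val this⟩
  map_add' x y := by ext i; rfl
  map_smul' c x := by ext i; rfl
  left_inv x := by
    ext v
    by_cases h : v ∈ coreSet G
    · simp [extMap, h]
    · have hx : (G.adjMatrix ℝ).mulVec x.val = 0 := x.property
      simp [extMap, h, ker_vanish G hx h]
  right_inv y := by
    ext i
    simp [extMap, i.property]

end aux

/-- For a singular core-labelled graph, `Q` has linearly independent columns iff
`η(G) = |CV| - |N(CV)|`. -/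
theorem stmt_8 (G : SimpleGraph V) [DecidableRel G.Adj]
    (hsing : ∃ x : V → ℝ, x ≠ 0 ∧ (G.adjMatrix ℝ).mulVec x = 0)
    (hind : ∀ a b : V, a ∈ coreSet G → b ∈ coreSet G → ¬ G.Adj a b) :
    LinearIndependent ℝ (fun (j : nbhdSet G) => fun i => Qmat G i j)
      ↔ (nullity (G.adjMatrix ℝ) : ℤ)
          = (Fintype.card (coreSet G) : ℤ) - Fintype.card (nbhdSet G) := by
  set Q := Qmat G
  -- nullity A = finrank ker (Lmap G)
  have hnull : nullity (G.adjMatrix ℝ)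
      = Module.finrank ℝ (LinearMap.ker (Lmap G)) :=
    LinearEquiv.finrank_eq (kerEquiv G hind)
  -- rank-nullity for Qᵀ
  have hrn1 : Qᵀ.rank + Module.finrank ℝ (LinearMap.ker (Lmap G))
      = Fintype.card (coreSet G) := by
    have := LinearMap.finrank_range_add_finrank_ker (Lmap G)
    rw [Module.finrank_fintype_fun_eq_card] at this
    exact this
  -- rank-nullity for Q
  have hrn2 : Q.rank + Module.finrank ℝ (LinearMap.ker Q.mulVecLin)
      = Fintype.card (nbhdSet G) := by
    have := LinearMap.finrank_range_add_finrank_ker Q.mulVecLin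
    rw [Module.finrank_fintype_fun_eq_card] at this
    exact this
  have htr : Qᵀ.rank = Q.rank := Matrix.rank_transpose Q
  -- linear independence of columns ↔ ker Q.mulVecLin = ⊥
  have hli : LinearIndependent ℝ (fun (j : nbhdSet G) => fun i => Q i j)
      ↔ Module.finrank ℝ (LinearMap.ker Q.mulVecLin) = 0 := by
    rw [Submodule.finrank_eq_zero]
    constructor
    · intro h
      rw [LinearMap.ker_eq_bot']
      intro g hg
      have := Fintype.linearIndependent_iff.mp h g ?_
      · funext j; exact this j
      · funext i
        have := congrFun hg i
        simpa [mulVec, dotProduct, mul_comm] using this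
    · intro h
      rw [LinearMap.ker_eq_bot'] at h
      refine Fintype.linearIndependent_iff.mpr fun g hg j => ?_
      have : Q.mulVecLin g = 0 := by
        funext i
        have := congrFun hg i
        simpa [mulVec, dotProduct, mul_comm] using this
      exact congrFun (h g this) j
  rw [hli, hnull]
  omega
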